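/- Let V be a finite-dimensional complex inner product space and let A₁, A₂ be positive-semidefinite self-adjoint linear operators on V with null spaces L₁ = ker A₁ and L₂ = ker A₂, and set L = L₁ ∩ L₂. Suppose v > 0 is such that ⟨x, Aᵢ x⟩ ≥ v‖x‖² for every x orthogonal to Lᵢ (i = 1, 2). Let c = sup{|⟨x, y⟩| : x ∈ L₁ ∩ L^⊥, y ∈ L₂ ∩ L^⊥, ‖x‖ = ‖y‖ = 1} (where L^⊥ is the orthogonal complement of L, and the supremum over an empty set is 0). Then for every x ∈ L^⊥, ⟨x, (A₁ + A₂) x⟩ ≥ v(1 − c)‖x‖²; equivalently, the smallest nonzero eigenvalue of A₁ + A₂ is at least v(1 − c). -/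

import Mathlib

open scoped InnerProductSpace

lemma kitaev_aux {V : Type*} [NormedAddCommGroup V] [InnerProductSpace ℂ V]
    [FiniteDimensional ℂ V]
    (A : V →ₗ[ℂ] V) (hsa : ∀ a b : V, ⟪A a, b⟫_ℂ = ⟪a, A b⟫_ℂ)
    (v : ℝ) (hgap : ∀ a ∈ (LinearMap.ker A)ᗮ, v * ‖a‖ ^ 2 ≤ (⟪a, A a⟫_ℂ).re)
    (L : Submodule ℂ V) (hLle : L ≤ LinearMap.ker A) (x : V) (hx : x ∈ Lᗮ) :
    ∃ u, u ∈ LinearMap.ker A ⊓ Lᗮ ∧ (⟪x, u⟫_ℂ).re = ‖u‖ ^ 2 ∧ ‖u‖ ^ 2 ≤ ‖x‖ ^ 2 ∧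
      v * (‖x‖ ^ 2 - ‖u‖ ^ 2) ≤ (⟪x, A x⟫_ℂ).re := by
  set K := LinearMap.ker A with hK
  set u : V := (K.orthogonalProjectionOnto x : V) with hu
  have hu_mem : u ∈ K := (K.orthogonalProjectionOnto x).2
  have hperp : x - u ∈ Kᗮ := K.sub_starProjection_mem_orthogonal x
  have hAu : A u = 0 := hu_mem
  -- inner products
  have hinner_perp : ⟪u, x - u⟫_ℂ = 0 :=
    Submodule.inner_right_of_mem_orthogonal hu_mem hperp
  have hinner_perp' : ⟪x - u, u⟫_ℂ = 0 :=
    Submodule.inner_left_of_mem_orthogonal hu_mem hperp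
  -- Pythagoras
  have hpyth : ‖x‖ ^ 2 = ‖u‖ ^ 2 + ‖x - u‖ ^ 2 := by
    have := norm_add_sq (𝕜 := ℂ) u (x - u)
    simp only [hinner_perp, map_zero, mul_zero, add_zero] at this
    simpa using this
  have hxu : (⟪x, u⟫_ℂ).re = ‖u‖ ^ 2 := by
    have : ⟪x, u⟫_ℂ = ⟪u, u⟫_ℂ + ⟪x - u, u⟫_ℂ := by
      rw [← inner_add_left]; congr 1; abel
    rw [this, hinner_perp', add_zero, inner_self_eq_norm_sq_to_K]
    norm_cast
  have huL : u ∈ Lᗮ := by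
    intro z hz
    have h1 : ⟪z, x⟫_ℂ = 0 := hx z hz
    have h2 : ⟪z, x - u⟫_ℂ = 0 := hperp z (hLle hz)
    have : ⟪z, u⟫_ℂ = ⟪z, x⟫_ℂ - ⟪z, x - u⟫_ℂ := by
      rw [← inner_sub_right]; congr 1; abel
    rw [this, h1, h2, sub_zero]
  have hAx : (⟪x, A x⟫_ℂ).re = (⟪x - u, A (x - u)⟫_ℂ).re := by
    have hAxu : A x = A (x - u) := by
      rw [map_sub, hAu, sub_zero]
    have hsplit : ⟪x, A (x - u)⟫_ℂ = ⟪x - u, A (x - u)⟫_ℂ + ⟪u, A (x - u)⟫_ℂ := by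
      rw [← inner_add_left]; congr 1; abel
    have hzero : ⟪u, A (x - u)⟫_ℂ = 0 := by
      rw [← hsa u (x - u), hAu, inner_zero_left]
    rw [hAxu, hsplit, hzero, add_zero]
  have hgap' : v * ‖x - u‖ ^ 2 ≤ (⟪x - u, A (x - u)⟫_ℂ).re := hgap _ hperp
  refine ⟨u, ⟨hu_mem, huL⟩, hxu, by nlinarith [sq_nonneg ‖x - u‖], ?_⟩
  rw [hAx]
  have heq : ‖x‖ ^ 2 - ‖u‖ ^ 2 = ‖x - u‖ ^ 2 := by linarith
  rw [heq]; exact hgap'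

/-- **Corollary to Kitaev's geometric lemma.**
If `A₁, A₂` are positive-semidefinite self-adjoint operators with kernels `L₁, L₂` and
`L = L₁ ⊓ L₂`, each with spectral gap at least `v`, and `c` is the cosine of the angle
between `L₁ ⊓ Lᗮ` and `L₂ ⊓ Lᗮ`, then for every `x ∈ Lᗮ`,
`⟨x, (A₁ + A₂) x⟩ ≥ v (1 − c) ‖x‖²`, i.e. the smallest nonzero eigenvalue of `A₁ + A₂`
is at least `v (1 − c)`. -/
theorem kitaev_geometric_corollary
    {V : Type*} [NormedAddCommGroup V] [InnerProductSpace ℂ V] [FiniteDimensional ℂ V]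
    (A₁ A₂ : V →ₗ[ℂ] V)
    (hA₁_sa : ∀ x y : V, ⟪A₁ x, y⟫_ℂ = ⟪x, A₁ y⟫_ℂ)
    (hA₂_sa : ∀ x y : V, ⟪A₂ x, y⟫_ℂ = ⟪x, A₂ y⟫_ℂ)
    (hA₁_pos : ∀ x : V, 0 ≤ (⟪x, A₁ x⟫_ℂ).re)
    (hA₂_pos : ∀ x : V, 0 ≤ (⟪x, A₂ x⟫_ℂ).re)
    (L : Submodule ℂ V) (hL : L = LinearMap.ker A₁ ⊓ LinearMap.ker A₂)
    (v : ℝ) (hv : 0 < v)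
    (hgap₁ : ∀ x ∈ (LinearMap.ker A₁)ᗮ, v * ‖x‖ ^ 2 ≤ (⟪x, A₁ x⟫_ℂ).re)
    (hgap₂ : ∀ x ∈ (LinearMap.ker A₂)ᗮ, v * ‖x‖ ^ 2 ≤ (⟪x, A₂ x⟫_ℂ).re)
    (c : ℝ)
    (hc : c = sSup {r : ℝ | ∃ x ∈ LinearMap.ker A₁ ⊓ Lᗮ, ∃ y ∈ LinearMap.ker A₂ ⊓ Lᗮ,
        ‖x‖ = 1 ∧ ‖y‖ = 1 ∧ r = ‖⟪x, y⟫_ℂ‖}) :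
    ∀ x ∈ Lᗮ, v * (1 - c) * ‖x‖ ^ 2 ≤ (⟪x, (A₁ + A₂) x⟫_ℂ).re := by
  intro x hx
  set S : Set ℝ := {r : ℝ | ∃ x ∈ LinearMap.ker A₁ ⊓ Lᗮ, ∃ y ∈ LinearMap.ker A₂ ⊓ Lᗮ,
      ‖x‖ = 1 ∧ ‖y‖ = 1 ∧ r = ‖⟪x, y⟫_ℂ‖} with hS
  have hbdd : BddAbove S := by
    refine ⟨1, fun r hr => ?_⟩
    obtain ⟨a, ha, b, hb, ha1, hb1, hr⟩ := hr
    rw [hr]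
    calc ‖⟪a, b⟫_ℂ‖ ≤ ‖a‖ * ‖b‖ := norm_inner_le_norm a b
    _ = 1 := by rw [ha1, hb1, one_mul]
  have hc0 : 0 ≤ c := by
    rcases Set.eq_empty_or_nonempty S with hSe | hSne
    · rw [hc, hSe, Real.sSup_empty]
    · obtain ⟨r, hr⟩ := hSne
      obtain ⟨a, ha, b, hb, ha1, hb1, hrr⟩ := hr
      have h0r : 0 ≤ r := hrr ▸ norm_nonneg _
      have : r ≤ c := by rw [hc]; exact le_csSup hbdd ⟨a, ha, b, hb, ha1, hb1, hrr⟩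
      linarith
  -- the angle bound
  have hcos : ∀ a ∈ LinearMap.ker A₁ ⊓ Lᗮ, ∀ b ∈ LinearMap.ker A₂ ⊓ Lᗮ,
      (⟪a, b⟫_ℂ).re ≤ c * (‖a‖ * ‖b‖) := by
    intro a ha b hb
    rcases eq_or_ne a 0 with rfl | ha0
    · simp
    rcases eq_or_ne b 0 with rfl | hb0
    · simp
    have hna : (0:ℝ) < ‖a‖ := norm_pos_iff.mpr ha0
    have hnb : (0:ℝ) < ‖b‖ := norm_pos_iff.mpr hb0
    set a' : V := ((‖a‖ : ℂ))⁻¹ • a with ha'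
    set b' : V := ((‖b‖ : ℂ))⁻¹ • b with hb'
    have ha'1 : ‖a'‖ = 1 := by
      rw [ha', norm_smul]
      simp [hna.ne', abs_of_pos hna]
    have hb'1 : ‖b'‖ = 1 := by
      rw [hb', norm_smul]
      simp [hnb.ne', abs_of_pos hnb]
    have ha'mem : a' ∈ LinearMap.ker A₁ ⊓ Lᗮ := Submodule.smul_mem _ _ ha
    have hb'mem : b' ∈ LinearMap.ker A₂ ⊓ Lᗮ := Submodule.smul_mem _ _ hb
    have hmem : ‖⟪a', b'⟫_ℂ‖ ∈ S :=
      ⟨a', ha'mem, b', hb'mem, ha'1, hb'1, rfl⟩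
    have hle : ‖⟪a', b'⟫_ℂ‖ ≤ c := by rw [hc]; exact le_csSup hbdd hmem
    have hval : ‖⟪a', b'⟫_ℂ‖ = ‖a‖⁻¹ * ‖b‖⁻¹ * ‖⟪a, b⟫_ℂ‖ := by
      rw [ha', hb', inner_smul_left, inner_smul_right]
      simp [norm_mul, abs_of_pos hna, abs_of_pos hnb]
      ring
    have hnorm_le : ‖⟪a, b⟫_ℂ‖ ≤ c * (‖a‖ * ‖b‖) := by
      rw [hval] at hle
      have := mul_le_mul_of_nonneg_right hle (by positivity : (0:ℝ) ≤ ‖a‖ * ‖b‖)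
      calc ‖⟪a, b⟫_ℂ‖ = ‖a‖⁻¹ * ‖b‖⁻¹ * ‖⟪a, b⟫_ℂ‖ * (‖a‖ * ‖b‖) := by
            field_simp
        _ ≤ c * (‖a‖ * ‖b‖) := this
    calc (⟪a, b⟫_ℂ).re ≤ ‖⟪a, b⟫_ℂ‖ := Complex.re_le_norm _
      _ ≤ c * (‖a‖ * ‖b‖) := hnorm_le
  -- apply the auxiliary lemma to both operators
  obtain ⟨u₁, hu₁mem, hxu₁, hu₁le, hbound₁⟩ :=
    kitaev_aux A₁ hA₁_sa v hgap₁ L (hL ▸ inf_le_left) x hx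
  obtain ⟨u₂, hu₂mem, hxu₂, hu₂le, hbound₂⟩ :=
    kitaev_aux A₂ hA₂_sa v hgap₂ L (hL ▸ inf_le_right) x hx
  -- the key estimate: ‖u₁‖² + ‖u₂‖² ≤ (1 + c) ‖x‖²
  have hre12 : (⟪u₁, u₂⟫_ℂ).re ≤ c * (‖u₁‖ * ‖u₂‖) := hcos u₁ hu₁mem u₂ hu₂mem
  have hsum : (⟪x, u₁ + u₂⟫_ℂ).re = ‖u₁‖ ^ 2 + ‖u₂‖ ^ 2 := by
    rw [inner_add_right, Complex.add_re, hxu₁, hxu₂]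
  have hCS : (⟪x, u₁ + u₂⟫_ℂ).re ≤ ‖x‖ * ‖u₁ + u₂‖ := by
    calc (⟪x, u₁ + u₂⟫_ℂ).re ≤ ‖⟪x, u₁ + u₂⟫_ℂ‖ := Complex.re_le_norm _
      _ ≤ ‖x‖ * ‖u₁ + u₂‖ := norm_inner_le_norm _ _
  have hnormsum : ‖u₁ + u₂‖ ^ 2 ≤ (1 + c) * (‖u₁‖ ^ 2 + ‖u₂‖ ^ 2) := by
    have h := norm_add_sq (𝕜 := ℂ) u₁ u₂
    have hre : RCLike.re ⟪u₁, u₂⟫_ℂ = (⟪u₁, u₂⟫_ℂ).re := rfl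
    rw [hre] at h
    have h2 : 2 * (‖u₁‖ * ‖u₂‖) ≤ ‖u₁‖ ^ 2 + ‖u₂‖ ^ 2 := by nlinarith [sq_nonneg (‖u₁‖ - ‖u₂‖)]
    nlinarith [hre12, mul_le_mul_of_nonneg_left h2 hc0]
  have hkey : ‖u₁‖ ^ 2 + ‖u₂‖ ^ 2 ≤ (1 + c) * ‖x‖ ^ 2 := by
    set s : ℝ := ‖u₁‖ ^ 2 + ‖u₂‖ ^ 2 with hs
    rcases le_or_gt s 0 with hs0 | hs0
    · nlinarith [sq_nonneg ‖x‖]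
    · have h1 : s ≤ ‖x‖ * ‖u₁ + u₂‖ := hsum ▸ hCS
      have h2 : ‖u₁ + u₂‖ ^ 2 ≤ (1 + c) * s := hnormsum
      nlinarith [norm_nonneg (u₁ + u₂), norm_nonneg x, sq_nonneg (‖x‖ * ‖u₁ + u₂‖)]
  -- conclude
  have hsplit : (⟪x, (A₁ + A₂) x⟫_ℂ).re = (⟪x, A₁ x⟫_ℂ).re + (⟪x, A₂ x⟫_ℂ).re := by
    simp [inner_add_right]
  rw [hsplit]
  nlinarith [mul_le_mul_of_nonneg_left hkey hv.le]
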